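/- The set of points of Γ all of whose coordinates square to 1 is exactly the four-element set {𝟙, ρ₁, ρ₂, ρ₁ρ₂}, where 𝟙 = (1,1,1,1,1,1,1,1,1), ρ₁ = (1, −1, 1, −1, 1, 1, −1, 1, −1), ρ₂ = (−1, 1, 1, 1, −1, 1, −1, 1, −1), and ρ₁ρ₂ = (−1, −1, 1, −1, −1, 1, 1, 1, 1); moreover this set is a subgroup of (ℂ*)⁹ isomorphic to ℤ/2 × ℤ/2. -/

import Mathlib

/-- The essential component `Γ` of the first characteristic variety of the
B₃ reflection arrangement, corresponding to the neighborly partition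
`(156|248|379)`. -/
noncomputable def GammaB3 : Set (Fin 9 → ℂ) :=
  {x | ∃ s t : ℂ, s ≠ 0 ∧ t ≠ 0 ∧
    x = ![t, s, ((s * t) ^ 2)⁻¹, s, t, t ^ 2, (s * t)⁻¹, s ^ 2, (s * t)⁻¹]}

/-- The four-element set `{𝟙, ρ₁, ρ₂, ρ₁ρ₂}`. -/
def fourTorsionSet : Set (Fin 9 → ℂ) :=
  {![1, 1, 1, 1, 1, 1, 1, 1, 1],
   ![1, -1, 1, -1, 1, 1, -1, 1, -1],
   ![-1, 1, 1, 1, -1, 1, -1, 1, -1],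
   ![-1, -1, 1, -1, -1, 1, 1, 1, 1]}

/-! ### Auxiliary definitions for the Klein four subgroup -/

noncomputable def gU : ZMod 2 → ℂˣ := fun k => (-1) ^ k.val

lemma gU_add (a b : ZMod 2) : gU (a + b) = gU a * gU b := by
  fin_cases a <;> fin_cases b <;>
    simp [gU] <;>
    norm_num [show ZMod.val (2 : ZMod 2) = 0 from rfl,
      show ZMod.val (1 : ZMod 2) = 1 from rfl] <;>
    rw [← pow_add] <;> first | rfl | (show (-1 : ℂˣ) ^ 0 = (-1) ^ (1 + 1); simp)

def cOne : Fin 9 → ZMod 2 := ![0, 1, 0, 1, 0, 0, 1, 0, 1]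
def cTwo : Fin 9 → ZMod 2 := ![1, 0, 0, 0, 1, 0, 1, 0, 1]

noncomputable def fKlein : Multiplicative (ZMod 2 × ZMod 2) →* (Fin 9 → ℂˣ) where
  toFun := fun a i => gU (a.toAdd.1 * cOne i + a.toAdd.2 * cTwo i)
  map_one' := by
    funext i
    simp [gU]
  map_mul' := by
    intro a b
    funext i
    show gU _ = gU _ * gU _
    rw [← gU_add]
    congr 1
    show ((a * b).toAdd.1) * cOne i + ((a * b).toAdd.2) * cTwo i = _
    rw [toAdd_mul]
    show (a.toAdd.1 + b.toAdd.1) * cOne i + (a.toAdd.2 + b.toAdd.2) * cTwo i = _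
    ring

lemma fKlein_apply (x y : ZMod 2) (i : Fin 9) :
    fKlein (Multiplicative.ofAdd (x, y)) i = gU (x * cOne i + y * cTwo i) := rfl

lemma coe_fKlein_00 :
    (fun i => ((fKlein (Multiplicative.ofAdd ((0 : ZMod 2), (0 : ZMod 2))) i : ℂ))) =
      ![1, 1, 1, 1, 1, 1, 1, 1, 1] := by
  funext i
  rw [fKlein_apply]
  fin_cases i <;>
    norm_num [gU, cOne, cTwo, show ZMod.val (0 : ZMod 2) = 0 from rfl,
      show ZMod.val (1 : ZMod 2) = 1 from rfl]

lemma coe_fKlein_10 :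
    (fun i => ((fKlein (Multiplicative.ofAdd ((1 : ZMod 2), (0 : ZMod 2))) i : ℂ))) =
      ![1, -1, 1, -1, 1, 1, -1, 1, -1] := by
  funext i
  rw [fKlein_apply]
  fin_cases i <;>
    norm_num [gU, cOne, cTwo, show ZMod.val (0 : ZMod 2) = 0 from rfl,
      show ZMod.val (1 : ZMod 2) = 1 from rfl]

lemma coe_fKlein_01 :
    (fun i => ((fKlein (Multiplicative.ofAdd ((0 : ZMod 2), (1 : ZMod 2))) i : ℂ))) =
      ![-1, 1, 1, 1, -1, 1, -1, 1, -1] := by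
  funext i
  rw [fKlein_apply]
  fin_cases i <;>
    norm_num [gU, cOne, cTwo, show ZMod.val (0 : ZMod 2) = 0 from rfl,
      show ZMod.val (1 : ZMod 2) = 1 from rfl]

lemma coe_fKlein_11 :
    (fun i => ((fKlein (Multiplicative.ofAdd ((1 : ZMod 2), (1 : ZMod 2))) i : ℂ))) =
      ![-1, -1, 1, -1, -1, 1, 1, 1, 1] := by
  funext i
  rw [fKlein_apply]
  fin_cases i <;>
    norm_num [gU, cOne, cTwo, show ZMod.val (0 : ZMod 2) = 0 from rfl,
      show ZMod.val (1 : ZMod 2) = 1 from rfl,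
      show ZMod.val (2 : ZMod 2) = 0 from rfl]

lemma zmod2_cases (z : ZMod 2) : z = 0 ∨ z = 1 := by revert z; decide

lemma fKlein_injective : Function.Injective fKlein := by
  refine (injective_iff_map_eq_one fKlein).mpr ?_
  intro a ha
  have key : a = Multiplicative.ofAdd (a.toAdd.1, a.toAdd.2) := rfl
  rcases zmod2_cases a.toAdd.1 with hx | hx <;> rcases zmod2_cases a.toAdd.2 with hy | hy <;>
    rw [hx, hy] at key
  · rw [key]; rfl
  · exfalso
    rw [key] at ha
    have h1 := congrFun coe_fKlein_01 0
    rw [ha] at h1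
    norm_num at h1
  · exfalso
    rw [key] at ha
    have h1 := congrFun coe_fKlein_10 1
    rw [ha] at h1
    norm_num at h1
  · exfalso
    rw [key] at ha
    have h1 := congrFun coe_fKlein_11 0
    rw [ha] at h1
    norm_num at h1

/-- the points of `Γ` all of whose coordinates square to `1` are
exactly `{𝟙, ρ₁, ρ₂, ρ₁ρ₂}`, and this set is a subgroup of `(ℂ*)⁹`
isomorphic to `ℤ/2 × ℤ/2`. -/
theorem Gamma_two_torsion :
    {x ∈ GammaB3 | ∀ i, x i ^ 2 = 1} = fourTorsionSet ∧
    ∃ H : Subgroup (Fin 9 → ℂˣ),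
      (∀ u : Fin 9 → ℂˣ, u ∈ H ↔ (fun i => (u i : ℂ)) ∈ fourTorsionSet) ∧
      Nonempty (H ≃* Multiplicative (ZMod 2 × ZMod 2)) := by
  constructor
  · ext x
    constructor
    · rintro ⟨⟨s, t, hs, ht, rfl⟩, h⟩
      have ht2 : t ^ 2 = 1 := h 0
      have hs2 : s ^ 2 = 1 := h 1
      have ht' : t = 1 ∨ t = -1 := by
        rcases mul_eq_zero.mp (show (t - 1) * (t + 1) = 0 by linear_combination ht2) with h' | h'
        · exact Or.inl (by linear_combination h')
        · exact Or.inr (by linear_combination h')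
      have hs' : s = 1 ∨ s = -1 := by
        rcases mul_eq_zero.mp (show (s - 1) * (s + 1) = 0 by linear_combination hs2) with h' | h'
        · exact Or.inl (by linear_combination h')
        · exact Or.inr (by linear_combination h')
      simp only [fourTorsionSet, Set.mem_insert_iff, Set.mem_singleton_iff]
      rcases ht' with rfl | rfl <;> rcases hs' with rfl | rfl
      · exact Or.inl (by funext i; fin_cases i <;> norm_num)
      · exact Or.inr (Or.inl (by funext i; fin_cases i <;> norm_num))
      · exact Or.inr (Or.inr (Or.inl (by funext i; fin_cases i <;> norm_num)))
      · exact Or.inr (Or.inr (Or.inr (by funext i; fin_cases i <;> norm_num)))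
    · intro hx
      simp only [fourTorsionSet, Set.mem_insert_iff, Set.mem_singleton_iff] at hx
      rcases hx with rfl | rfl | rfl | rfl
      · refine ⟨⟨1, 1, one_ne_zero, one_ne_zero, ?_⟩, ?_⟩
        · funext i; fin_cases i <;> norm_num
        · intro i; fin_cases i <;> norm_num
      · refine ⟨⟨-1, 1, by norm_num, one_ne_zero, ?_⟩, ?_⟩
        · funext i; fin_cases i <;> norm_num
        · intro i; fin_cases i <;> norm_num
      · refine ⟨⟨1, -1, one_ne_zero, by norm_num, ?_⟩, ?_⟩
        · funext i; fin_cases i <;> norm_num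
        · intro i; fin_cases i <;> norm_num
      · refine ⟨⟨-1, -1, by norm_num, by norm_num, ?_⟩, ?_⟩
        · funext i; fin_cases i <;> norm_num
        · intro i; fin_cases i <;> norm_num
  · refine ⟨fKlein.range, ?_, ⟨(MonoidHom.ofInjective fKlein_injective).symm⟩⟩
    intro u
    constructor
    · rintro ⟨a, rfl⟩
      have key : a = Multiplicative.ofAdd (a.toAdd.1, a.toAdd.2) := rfl
      simp only [fourTorsionSet, Set.mem_insert_iff, Set.mem_singleton_iff]
      rcases zmod2_cases a.toAdd.1 with hx | hx <;> rcases zmod2_cases a.toAdd.2 with hy | hy <;>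
        rw [hx, hy] at key <;> rw [key]
      · exact Or.inl coe_fKlein_00
      · exact Or.inr (Or.inr (Or.inl coe_fKlein_01))
      · exact Or.inr (Or.inl coe_fKlein_10)
      · exact Or.inr (Or.inr (Or.inr coe_fKlein_11))
    · intro hu
      simp only [fourTorsionSet, Set.mem_insert_iff, Set.mem_singleton_iff] at hu
      rcases hu with h | h | h | h
      · exact ⟨Multiplicative.ofAdd (0, 0),
          funext fun i => Units.ext ((congrFun coe_fKlein_00 i).trans (congrFun h i).symm)⟩
      · exact ⟨Multiplicative.ofAdd (1, 0),
          funext fun i => Units.ext ((congrFun coe_fKlein_10 i).trans (congrFun h i).symm)⟩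
      · exact ⟨Multiplicative.ofAdd (0, 1),
          funext fun i => Units.ext ((congrFun coe_fKlein_01 i).trans (congrFun h i).symm)⟩
      · exact ⟨Multiplicative.ofAdd (1, 1),
          funext fun i => Units.ext ((congrFun coe_fKlein_11 i).trans (congrFun h i).symm)⟩
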